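/- Let r₁, r₂, r₃ > 0 and m₁, m₂, m₃ > 0, and let S = {(d₁₂, d₂₃, d₃₁) ∈ ℝ³ : d_ij ≥ r_i + r_j for each pair, and the three triangle inequalities hold}. Then the contact point (r₁ + r₂, r₂ + r₃, r₃ + r₁) belongs to S, and the gravitational potential U = −(m₁m₂/d₁₂ + m₂m₃/d₂₃ + m₃m₁/d₃₁) attains its unique global minimum on S at this point. Consequently, at angular momentum H = 0 the amended potential 𝓔 = U is globally minimized at the Lagrange Resting configuration, which is therefore the minimum energy configuration and is energetically stable. -/

import Mathlib

/-- The admissible configuration set: triples of mutual distances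
`(d₁₂, d₂₃, d₃₁)` satisfying the contact constraints `d_ij ≥ r_i + r_j`
and the triangle inequalities. -/
def admissibleSet (r1 r2 r3 : ℝ) : Set (ℝ × ℝ × ℝ) :=
  {d : ℝ × ℝ × ℝ |
    r1 + r2 ≤ d.1 ∧ r2 + r3 ≤ d.2.1 ∧ r3 + r1 ≤ d.2.2 ∧
    d.1 ≤ d.2.1 + d.2.2 ∧ d.2.1 ≤ d.2.2 + d.1 ∧ d.2.2 ≤ d.1 + d.2.1}

/-- The gravitational potential energy. -/
noncomputable def gravPotential (m1 m2 m3 : ℝ) (d : ℝ × ℝ × ℝ) : ℝ :=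
  -(m1 * m2 / d.1 + m2 * m3 / d.2.1 + m3 * m1 / d.2.2)

/-- The amended potential `𝓔 = H²/(2 I_H) + U`. -/
noncomputable def amendedPotential (m1 m2 m3 IS H : ℝ) (d : ℝ × ℝ × ℝ) : ℝ :=
  H ^ 2 / (2 * (m1 * m2 * d.1 ^ 2 + m2 * m3 * d.2.1 ^ 2 + m3 * m1 * d.2.2 ^ 2 + IS))
    + gravPotential m1 m2 m3 d

private lemma div_mono_aux {c a x : ℝ} (hc : 0 < c) (ha : 0 < a) (hx : a ≤ x) :
    c / x ≤ c / a :=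
  div_le_div_of_nonneg_left hc.le ha hx

private lemma div_eq_aux {c a x : ℝ} (hc : 0 < c) (ha : 0 < a) (hx : a ≤ x)
    (h : c / x = c / a) : x = a := by
  have hx0 : 0 < x := lt_of_lt_of_le ha hx
  rw [div_eq_div_iff hx0.ne' ha.ne'] at h
  exact mul_left_cancel₀ hc.ne' h.symm

/-- The Lagrange Resting configuration `(r₁+r₂, r₂+r₃, r₃+r₁)` is admissible
and is the unique global minimizer of the gravitational potential `U` on the
admissible set; consequently at `H = 0` the amended potential `𝓔 = U` is
globally minimized there, so the Lagrange Resting configuration is the minimum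
energy configuration and is energetically stable. -/
theorem lagrange_resting_min_energy
    (r1 r2 r3 m1 m2 m3 IS : ℝ)
    (hr1 : 0 < r1) (hr2 : 0 < r2) (hr3 : 0 < r3)
    (hm1 : 0 < m1) (hm2 : 0 < m2) (hm3 : 0 < m3) (hIS : 0 < IS) :
    (r1 + r2, r2 + r3, r3 + r1) ∈ admissibleSet r1 r2 r3 ∧
      (∀ q ∈ admissibleSet r1 r2 r3,
        gravPotential m1 m2 m3 (r1 + r2, r2 + r3, r3 + r1) ≤ gravPotential m1 m2 m3 q) ∧
      (∀ q ∈ admissibleSet r1 r2 r3,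
        gravPotential m1 m2 m3 q = gravPotential m1 m2 m3 (r1 + r2, r2 + r3, r3 + r1) →
        q = (r1 + r2, r2 + r3, r3 + r1)) ∧
      (∀ q, amendedPotential m1 m2 m3 IS 0 q = gravPotential m1 m2 m3 q) ∧
      (∀ q ∈ admissibleSet r1 r2 r3,
        amendedPotential m1 m2 m3 IS 0 (r1 + r2, r2 + r3, r3 + r1) ≤
          amendedPotential m1 m2 m3 IS 0 q) := by
  have ha12 : 0 < r1 + r2 := by linarith
  have ha23 : 0 < r2 + r3 := by linarith
  have ha31 : 0 < r3 + r1 := by linarith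
  have hmem : (r1 + r2, r2 + r3, r3 + r1) ∈ admissibleSet r1 r2 r3 := by
    simp only [admissibleSet, Set.mem_setOf_eq]
    refine ⟨le_refl _, le_refl _, le_refl _, by linarith, by linarith, by linarith⟩
  have hle : ∀ q ∈ admissibleSet r1 r2 r3,
      gravPotential m1 m2 m3 (r1 + r2, r2 + r3, r3 + r1) ≤ gravPotential m1 m2 m3 q := by
    intro q hq
    obtain ⟨h1, h2, h3, -⟩ := hq
    have t1 := div_mono_aux (mul_pos hm1 hm2) ha12 h1
    have t2 := div_mono_aux (mul_pos hm2 hm3) ha23 h2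
    have t3 := div_mono_aux (mul_pos hm3 hm1) ha31 h3
    simp only [gravPotential]
    linarith
  refine ⟨hmem, hle, ?_, ?_, ?_⟩
  · intro q hq heq
    obtain ⟨h1, h2, h3, -⟩ := hq
    have t1 := div_mono_aux (mul_pos hm1 hm2) ha12 h1
    have t2 := div_mono_aux (mul_pos hm2 hm3) ha23 h2
    have t3 := div_mono_aux (mul_pos hm3 hm1) ha31 h3
    simp only [gravPotential] at heq
    have e1 : m1 * m2 / q.1 = m1 * m2 / (r1 + r2) := by linarith
    have e2 : m2 * m3 / q.2.1 = m2 * m3 / (r2 + r3) := by linarith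
    have e3 : m3 * m1 / q.2.2 = m3 * m1 / (r3 + r1) := by linarith
    have := div_eq_aux (mul_pos hm1 hm2) ha12 h1 e1
    have := div_eq_aux (mul_pos hm2 hm3) ha23 h2 e2
    have := div_eq_aux (mul_pos hm3 hm1) ha31 h3 e3
    exact Prod.ext (by assumption) (Prod.ext (by assumption) (by assumption))
  · intro q
    simp [amendedPotential]
  · intro q hq
    have h := hle q hq
    simp only [amendedPotential]
    norm_num
    linarith
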